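/- Let A : Matrix (Fin n) (Fin n) ℂ be Hermitian with hA : A.IsHermitian, and let hA.eigenvalues : Fin n → ℝ be its eigenvalues. If there is a permutation σ of Fin n such that A i i = (hA.eigenvalues (σ i) : ℂ) for every i, then A is diagonal: A i j = 0 whenever i ≠ j. -/

import Mathlib

/-- If the diagonal of a Hermitian matrix is a permutation of its eigenvalues,
then the matrix is diagonal. -/
theorem stmt_15 (n : ℕ) (A : Matrix (Fin n) (Fin n) ℂ) (hA : A.IsHermitian)
    (σ : Equiv.Perm (Fin n))
    (h : ∀ i, A i i = (hA.eigenvalues (σ i) : ℂ)) :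
    ∀ i j, i ≠ j → A i j = 0 := by
  -- trace (A*A) = ∑ λ²
  have hU := hA.spectral_theorem
  set U : Matrix (Fin n) (Fin n) ℂ := (hA.eigenvectorUnitary : Matrix (Fin n) (Fin n) ℂ) with hUdef
  set D : Matrix (Fin n) (Fin n) ℂ := Matrix.diagonal (RCLike.ofReal ∘ hA.eigenvalues) with hDdef
  have hUU : star U * U = 1 := (Matrix.mem_unitaryGroup_iff').mp hA.eigenvectorUnitary.2
  have htr : (A * A).trace = ∑ i, ((hA.eigenvalues i : ℂ))^2 := by
    have hm : star U * (U * (D * star U)) = D * star U := by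
      rw [← Matrix.mul_assoc, hUU, Matrix.one_mul]
    calc (A * A).trace = (U * D * star U * (U * D * star U)).trace := by rw [hU, Unitary.conjStarAlgAut_apply]
      _ = (U * (D * D) * star U).trace := by
          simp only [Matrix.mul_assoc]
          rw [hm]
      _ = (D * D).trace := by
          rw [Matrix.trace_mul_cycle, ← Matrix.mul_assoc, hUU, Matrix.one_mul]
      _ = ∑ i, ((hA.eigenvalues i : ℂ))^2 := by
          simp [hDdef, Matrix.diagonal_mul_diagonal, Matrix.trace_diagonal, sq]
  -- trace (A*A) = ∑ i j, ‖A i j‖²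
  have htr2 : (A * A).trace = ∑ i, ∑ j, (Complex.normSq (A i j) : ℂ) := by
    rw [Matrix.trace]
    congr 1; ext i
    rw [Matrix.diag_apply, Matrix.mul_apply]
    congr 1; ext j
    have : A j i = starRingEnd ℂ (A i j) := by
      conv_lhs => rw [← hA]
      simp [Matrix.conjTranspose_apply]
    rw [this, Complex.mul_conj]
  -- diagonal contributes ∑ λ² already
  have hdiag : ∑ i, (Complex.normSq (A i i) : ℝ) = ∑ i, (hA.eigenvalues i)^2 := by
    calc ∑ i, (Complex.normSq (A i i) : ℝ) = ∑ i, (hA.eigenvalues (σ i))^2 := by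
          apply Finset.sum_congr rfl; intro i _
          rw [h i]; simp [Complex.normSq_ofReal, sq]
      _ = ∑ i, (hA.eigenvalues i)^2 := Equiv.sum_comp σ (fun i => hA.eigenvalues i ^ 2)
  have key : ∑ i, ∑ j, Complex.normSq (A i j) = ∑ i, Complex.normSq (A i i) := by
    have : (∑ i, ∑ j, (Complex.normSq (A i j) : ℂ)) = ∑ i, ((hA.eigenvalues i : ℂ))^2 := by
      rw [← htr2, htr]
    have hr : ∑ i, ∑ j, Complex.normSq (A i j) = ∑ i, (hA.eigenvalues i)^2 := by
      exact_mod_cast this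
    rw [hr, hdiag]
  -- each off-diagonal normSq is 0
  have hsplit : ∀ i j, i ≠ j → Complex.normSq (A i j) = 0 := by
    have hnonneg : ∀ p : Fin n × Fin n, p.1 ≠ p.2 → 0 ≤ Complex.normSq (A p.1 p.2) :=
      fun p _ => Complex.normSq_nonneg _
    have hsum0 : ∑ i, ∑ j, (if i = j then 0 else Complex.normSq (A i j)) = 0 := by
      have : ∑ i, ∑ j, Complex.normSq (A i j)
          = ∑ i, ((∑ j, if i = j then 0 else Complex.normSq (A i j)) + Complex.normSq (A i i)) := by
        apply Finset.sum_congr rfl; intro i _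
        have hsel : Complex.normSq (A i i) = ∑ j, if i = j then Complex.normSq (A i j) else 0 := by
          simp
        rw [hsel, ← Finset.sum_add_distrib]
        apply Finset.sum_congr rfl; intro j _
        by_cases hij : i = j <;> simp [hij]
      rw [this, Finset.sum_add_distrib] at key
      linarith [key]
    intro i j hij
    have h1 : ∀ i ∈ Finset.univ, (0:ℝ) ≤ ∑ j, (if i = j then 0 else Complex.normSq (A i j)) := by
      intro i _
      apply Finset.sum_nonneg; intro j _
      by_cases hij : i = j <;> simp [hij, Complex.normSq_nonneg]
    have h2 := (Finset.sum_eq_zero_iff_of_nonneg h1).mp hsum0 i (Finset.mem_univ i)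
    have h3 : ∀ j ∈ Finset.univ, (0:ℝ) ≤ (if i = j then 0 else Complex.normSq (A i j)) := by
      intro j _; by_cases hij : i = j <;> simp [hij, Complex.normSq_nonneg]
    have := (Finset.sum_eq_zero_iff_of_nonneg h3).mp h2 j (Finset.mem_univ j)
    simpa [hij] using this
  intro i j hij
  exact Complex.normSq_eq_zero.mp (hsplit i j hij)
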